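/- Every quantifier-free L_WSO-formula is equivalent, in every model of Th(WSO(𝕀)), to a positive existential L_WSO-formula. -/

import Mathlib

namespace MCpaper

open FirstOrder Language Structure Set

/-- `𝕀`: a dense linear order with a least element `0` and no greatest element,
concretely the nonnegative rationals. -/
abbrev II : Type := NNRat

/-! ### Set-level operations associated to a linear order -/

section SetOps

variable {α : Type*} [LinearOrder α]

/-- The singleton of the least element of `A` (as a set; empty if `A` has no least element). -/
def minSet (A : Set α) : Set α := {i ∈ A | ∀ j ∈ A, i ≤ j}

/-- The singleton of the greatest element of `A` (as a set; empty if `A` has no greatest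
element). -/
def maxSet (A : Set α) : Set α := {i ∈ A | ∀ j ∈ A, j ≤ i}

/-- `sInvSet A B = {i ∈ A : i has a successor in the suborder A and that successor lies in B}`. -/
def sInvSet (A B : Set α) : Set α :=
  {i ∈ A | ∃ j ∈ A, i < j ∧ (∀ k ∈ A, i < k → j ≤ k) ∧ j ∈ B}

lemma minSet_subset (A : Set α) : minSet A ⊆ A := sep_subset _ _

lemma minSet_subsingleton (A : Set α) : (minSet A).Subsingleton :=
  fun x hx y hy => le_antisymm (hx.2 y hy.1) (hy.2 x hx.1)

lemma maxSet_subsingleton (A : Set α) : (maxSet A).Subsingleton :=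
  fun x hx y hy => le_antisymm (hy.2 x hx.1) (hx.2 y hy.1)
lemma maxSet_subset (A : Set α) : maxSet A ⊆ A := sep_subset _ _
lemma sInvSet_subset (A B : Set α) : sInvSet A B ⊆ A := sep_subset _ _

end SetOps

/-! ### The languages -/

/-- Relation symbols of `L_MO = {⊆, ∃<}`. -/
inductive MORel : ℕ → Type
  | sub : MORel 2
  | elt : MORel 2

/-- The language `L_MO = {⊆, ∃<}` with two binary relation symbols. -/
def LMO : Language := ⟨fun _ => Empty, MORel⟩

/-- Function symbols of `L_WSO`. -/
inductive WSOFunc : ℕ → Type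
  | union : WSOFunc 2
  | inter : WSOFunc 2
  | bot : WSOFunc 0
  | zero : WSOFunc 0
  | min : WSOFunc 1
  | max : WSOFunc 1
  | sinv : WSOFunc 2

/-- The language `L_WSO = {∪, ∩, ⊥, 𝟎, min, max, 𝔰⁻¹}`. -/
def LWSO : Language := ⟨WSOFunc, fun _ => Empty⟩

/-- Function symbols of `L_MSOFin`. -/
inductive MSOFinFunc : ℕ → Type
  | union : MSOFinFunc 2
  | inter : MSOFinFunc 2
  | bot : MSOFinFunc 0
  | zero : MSOFinFunc 0
  | zeroStar : MSOFinFunc 0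
  | sinv : MSOFinFunc 1

/-- The language `L_MSOFin = {∪, ∩, ⊥, 𝟎, 𝟎*, s⁻¹}`. -/
def LMSOFin : Language := ⟨MSOFinFunc, fun _ => Empty⟩

/-- Function symbols of `L_L`. -/
inductive LLFunc : ℕ → Type
  | union : LLFunc 2
  | inter : LLFunc 2
  | bot : LLFunc 0
  | zero : LLFunc 0
  | min : LLFunc 1
  | max : LLFunc 1
  | left : LLFunc 1
  | right : LLFunc 1

/-- The language `L_L = {∪, ∩, ⊥, 𝟎, min, max, l, r}`. -/
def LL : Language := ⟨LLFunc, fun _ => Empty⟩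

/-! ### `WSO(𝕀)` as an `L_WSO`-structure and as an `L_MO`-structure -/

/-- The universe of `WSO(𝕀)`: finite subsets of `𝕀`. -/
abbrev FinSub : Type := {A : Set II // A.Finite}

/-- `WSO(𝕀)` as an `L_WSO`-structure. -/
instance finSubLWSO : LWSO.Structure FinSub where
  funMap {n} f :=
    match f with
    | .union => fun v => ⟨(v 0).1 ∪ (v 1).1, (v 0).2.union (v 1).2⟩
    | .inter => fun v => ⟨(v 0).1 ∩ (v 1).1, (v 0).2.inter_of_left _⟩
    | .bot => fun _ => ⟨∅, finite_empty⟩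
    | .zero => fun _ => ⟨{0}, finite_singleton _⟩
    | .min => fun v => ⟨minSet (v 0).1, (v 0).2.subset (minSet_subset _)⟩
    | .max => fun v => ⟨maxSet (v 0).1, (v 0).2.subset (maxSet_subset _)⟩
    | .sinv => fun v => ⟨sInvSet (v 0).1 (v 1).1, (v 0).2.subset (sInvSet_subset _ _)⟩
  RelMap {n} r := Empty.elim r

/-- `WSO(α)` as an `L_MO`-structure, for any linearly ordered `α` (here specialised to `𝕀`). -/
instance finSubLMO : LMO.Structure FinSub where
  funMap {n} f := Empty.elim f
  RelMap {n} r :=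
    match r with
    | .sub => fun v => (v 0).1 ⊆ (v 1).1
    | .elt => fun v => ∃ a ∈ (v 0).1, ∃ b ∈ (v 1).1, a < b

/-- `MSO(α)`: the `L_MO`-structure on the full powerset of a linear order `α`. -/
instance powersetLMO (α : Type*) [LinearOrder α] : LMO.Structure (Set α) where
  funMap {n} f := Empty.elim f
  RelMap {n} r :=
    match r with
    | .sub => fun v => v 0 ⊆ v 1
    | .elt => fun v => ∃ a ∈ v 0, ∃ b ∈ v 1, a < b

/-! ### `MSO(n)` and the pseudofinite theory `T_MSOFin` -/

/-- `MSO(n)` as an `L_MSOFin`-structure on the powerset of `{0, …, n-1}`. -/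
instance msoFinStructure (n : ℕ) : LMSOFin.Structure (Set (Fin n)) where
  funMap {m} f :=
    match f with
    | .union => fun v => v 0 ∪ v 1
    | .inter => fun v => v 0 ∩ v 1
    | .bot => fun _ => ∅
    | .zero => fun _ => {i : Fin n | (i : ℕ) = 0}
    | .zeroStar => fun _ => {i : Fin n | (i : ℕ) = n - 1}
    | .sinv => fun v => {i : Fin n | ∃ j : Fin n, (j : ℕ) = (i : ℕ) + 1 ∧ j ∈ v 0}
  RelMap {m} r := Empty.elim r

/-- The pseudofinite monadic second order theory of linear order: the set of `L_MSOFin`-sentences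
true in `MSO(n)` for every `n`. -/
def TMSOFin : LMSOFin.Theory := {φ : LMSOFin.Sentence | ∀ n : ℕ, Set (Fin n) ⊨ φ}

/-! ### Abstract `L_MO`-structures: atoms and interval restrictions -/

section LMOAbstract

variable {M : Type*} [LMO.Structure M]

/-- The interpretation of `⊆` in an `L_MO`-structure. -/
def mSub (a b : M) : Prop := RelMap (L := LMO) MORel.sub ![a, b]

/-- The interpretation of `∃<` in an `L_MO`-structure. -/
def mLt (a b : M) : Prop := RelMap (L := LMO) MORel.elt ![a, b]

/-- `b` is the least element of the partial order `(M, ⊆)`. -/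
def IsBotM (b : M) : Prop := ∀ x : M, mSub b x

/-- `a` is an atom of `(M, ⊆)`: a minimal element strictly above the least element. -/
def IsAtomM (a : M) : Prop :=
  ∃ b : M, IsBotM b ∧ a ≠ b ∧ ∀ x : M, mSub x a → x = a ∨ x = b

/-- The carrier `{B : M ∣ every atom X ⊆ B satisfies (i ∃< X ∨ X = i) ∧ X ∃< j}`
of the restriction `M ↾ [i,j)`. -/
def intervalRes (i j : M) : Set M :=
  {B : M | ∀ X : M, IsAtomM X → mSub X B → (mLt i X ∨ X = i) ∧ mLt X j}

/-- The `L_MO`-structure induced on a subset of an `L_MO`-structure. -/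
def inducedLMO (s : Set M) : LMO.Structure s where
  funMap {n} f := Empty.elim f
  RelMap {n} r v := RelMap (M := M) r fun k => (v k : M)

end LMOAbstract

/-! ### Abstract `L_WSO`-structures, restrictions to elements -/

section LWSOAbstract

variable {M : Type*} [LWSO.Structure M]

/-- The interpretation of `∪` in an `L_WSO`-structure. -/
def wUnion (a b : M) : M := funMap (L := LWSO) WSOFunc.union ![a, b]

/-- The interpretation of `∩` in an `L_WSO`-structure. -/
def wInter (a b : M) : M := funMap (L := LWSO) WSOFunc.inter ![a, b]

/-- The interpretation of `⊥` in an `L_WSO`-structure. -/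
def wBot : M := funMap (L := LWSO) (M := M) WSOFunc.bot ![]

/-- The interpretation of `𝟎` in an `L_WSO`-structure. -/
def wZero : M := funMap (L := LWSO) (M := M) WSOFunc.zero ![]

/-- The interpretation of `min` in an `L_WSO`-structure. -/
def wMin (a : M) : M := funMap (L := LWSO) WSOFunc.min ![a]

/-- The interpretation of `max` in an `L_WSO`-structure. -/
def wMax (a : M) : M := funMap (L := LWSO) WSOFunc.max ![a]

/-- The interpretation of `𝔰⁻¹` in an `L_WSO`-structure. -/
def wSInv (a b : M) : M := funMap (L := LWSO) WSOFunc.sinv ![a, b]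

variable (M)

/-- The universe `{B : M ∣ B ∩ A = B}` of the restriction `M ↾ A`. -/
def Res (A : M) : Type _ := {B : M // wInter B A = B}

/-- The (true in every model of `Th(WSO(𝕀))`) closure conditions saying that
`{B : M ∣ B ∩ A = B}` is closed under the operations of the restricted structure `M ↾ A`. -/
structure ResClosed (A : M) : Prop where
  union : ∀ B C : M, wInter B A = B → wInter C A = C → wInter (wUnion B C) A = wUnion B C
  inter : ∀ B C : M, wInter B A = B → wInter C A = C → wInter (wInter B C) A = wInter B C
  bot : wInter (wBot : M) A = wBot
  zero : wInter (wMin A) A = wMin A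
  zeroStar : wInter (wMax A) A = wMax A
  sinv : ∀ B : M, wInter B A = B → wInter (wSInv A B) A = wSInv A B

variable {M}

/-- The restriction `M ↾ A` as an `L_MSOFin`-structure: `∪`, `∩`, `⊥` are inherited from `M`,
`𝟎` is `min(A)`, `𝟎*` is `max(A)`, and `s⁻¹` is `B ↦ 𝔰⁻¹(A, B)` computed in `M`. -/
def resStructure {A : M} (hc : ResClosed M A) : LMSOFin.Structure (Res M A) where
  funMap {m} f :=
    match f with
    | .union => fun v => ⟨wUnion (v 0).1 (v 1).1, hc.union _ _ (v 0).2 (v 1).2⟩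
    | .inter => fun v => ⟨wInter (v 0).1 (v 1).1, hc.inter _ _ (v 0).2 (v 1).2⟩
    | .bot => fun _ => ⟨wBot, hc.bot⟩
    | .zero => fun _ => ⟨wMin A, hc.zero⟩
    | .zeroStar => fun _ => ⟨wMax A, hc.zeroStar⟩
    | .sinv => fun v => ⟨wSInv A (v 0).1, hc.sinv _ (v 0).2⟩
  RelMap {m} r := Empty.elim r

/-- `⌊Ā⌋ = 𝟎 ∪ A₁ ∪ … ∪ Aₙ`, computed in `M`. -/
def wFloor {n : ℕ} (A : Fin n → M) : M := (List.ofFn A).foldl wUnion wZero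

end LWSOAbstract

/-! ### Complexity classes of formulas -/

section Complexity

variable {L : Language} {α : Type*}

/-- Positive existential formulas: those built from atomic formulas using only `∧`, `∨`
and `∃`. -/
inductive IsPosEx : {n : ℕ} → L.BoundedFormula α n → Prop
  | equal {n} (t₁ t₂ : L.Term (α ⊕ Fin n)) : IsPosEx (BoundedFormula.equal t₁ t₂)
  | rel {n k} (R : L.Relations k) (ts : Fin k → L.Term (α ⊕ Fin n)) :
      IsPosEx (BoundedFormula.rel R ts)
  | inf {n} {φ ψ : L.BoundedFormula α n} : IsPosEx φ → IsPosEx ψ → IsPosEx (φ ⊓ ψ)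
  | sup {n} {φ ψ : L.BoundedFormula α n} : IsPosEx φ → IsPosEx ψ → IsPosEx (φ ⊔ ψ)
  | ex {n} {φ : L.BoundedFormula α (n + 1)} : IsPosEx φ → IsPosEx φ.ex

/-- Existential formulas: a block of existential quantifiers applied to a
quantifier-free formula. -/
inductive IsExist : {n : ℕ} → L.BoundedFormula α n → Prop
  | of_isQF {n} {φ : L.BoundedFormula α n} : φ.IsQF → IsExist φ
  | ex {n} {φ : L.BoundedFormula α (n + 1)} : IsExist φ → IsExist φ.ex

end Complexity

/-! ### Finite unions of closed intervals and the structure `L(𝕀)` -/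

/-- `A` is a finite union of closed intervals of `𝕀` (each of the form `[i,j]` or `[i,∞)`;
intervals of the form `(-∞, j]` coincide with `[0, j]` since `𝕀` has least element `0`). -/
def IsFCI (A : Set II) : Prop :=
  ∃ (k : ℕ) (f : Fin k → Set II),
    (∀ m : Fin k, (∃ i j : II, f m = Set.Icc i j) ∨ ∃ i : II, f m = Set.Ici i) ∧ A = ⋃ m, f m

/-- The universe of `L(𝕀)`: finite unions of closed intervals of `𝕀`. -/
abbrev FCI : Type := {A : Set II // IsFCI A}

/-- The set of left endpoints of `A`. -/
def lSet (A : Set II) : Set II := {i ∈ A | i = 0 ∨ ∃ i' < i, Set.Ioo i' i ∩ A = ∅}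

/-- The set of right endpoints of `A`. -/
def rSet (A : Set II) : Set II := {i ∈ A | ∃ i'', i < i'' ∧ Set.Ioo i i'' ∩ A = ∅}

lemma isFCI_empty : IsFCI (∅ : Set II) := ⟨0, Fin.elim0, fun m => m.elim0, by simp⟩

lemma isFCI_singleton (i : II) : IsFCI {i} :=
  ⟨1, fun _ => Set.Icc i i, fun _ => Or.inl ⟨i, i, rfl⟩, by simp⟩

lemma IsFCI.union {A B : Set II} (hA : IsFCI A) (hB : IsFCI B) : IsFCI (A ∪ B) := by
  obtain ⟨k, f, hf, rfl⟩ := hA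
  obtain ⟨l, g, hg, rfl⟩ := hB
  refine ⟨k + l, fun m => Sum.elim f g (finSumFinEquiv.symm m), fun m => ?_, ?_⟩
  · dsimp only
    rcases finSumFinEquiv.symm m with i | j
    · exact hf i
    · exact hg j
  · ext x
    simp only [Set.mem_union, Set.mem_iUnion]
    constructor
    · rintro (⟨i, hi⟩ | ⟨j, hj⟩)
      · exact ⟨finSumFinEquiv (Sum.inl i), by simpa using hi⟩
      · exact ⟨finSumFinEquiv (Sum.inr j), by simpa using hj⟩
    · rintro ⟨m, hm⟩
      rcases h : finSumFinEquiv.symm m with i | j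
      · rw [h] at hm; exact Or.inl ⟨i, hm⟩
      · rw [h] at hm; exact Or.inr ⟨j, hm⟩

lemma Icc_inter_Ici' {a b c : II} : Set.Icc a b ∩ Set.Ici c = Set.Icc (a ⊔ c) b := by
  ext x
  simp only [Set.mem_inter_iff, Set.mem_Icc, Set.mem_Ici, sup_le_iff]
  tauto

lemma IsFCI.inter {A B : Set II} (hA : IsFCI A) (hB : IsFCI B) : IsFCI (A ∩ B) := by
  obtain ⟨k, f, hf, rfl⟩ := hA
  obtain ⟨l, g, hg, rfl⟩ := hB
  refine ⟨k * l, fun m => f (finProdFinEquiv.symm m).1 ∩ g (finProdFinEquiv.symm m).2,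
    fun m => ?_, ?_⟩
  · dsimp only
    rcases hf (finProdFinEquiv.symm m).1 with ⟨a, b, hab⟩ | ⟨a, ha⟩ <;>
      rcases hg (finProdFinEquiv.symm m).2 with ⟨c, d, hcd⟩ | ⟨c, hc⟩
    · exact Or.inl ⟨a ⊔ c, b ⊓ d, by rw [hab, hcd, Set.Icc_inter_Icc]⟩
    · exact Or.inl ⟨a ⊔ c, b, by rw [hab, hc, Icc_inter_Ici']⟩
    · exact Or.inl ⟨c ⊔ a, d, by rw [ha, hcd, Set.inter_comm, Icc_inter_Ici']⟩
    · exact Or.inr ⟨a ⊔ c, by rw [ha, hc, Set.Ici_inter_Ici]⟩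
  · ext x
    simp only [Set.mem_inter_iff, Set.mem_iUnion]
    constructor
    · rintro ⟨⟨i, hi⟩, ⟨j, hj⟩⟩
      exact ⟨finProdFinEquiv (i, j), by simpa using ⟨hi, hj⟩⟩
    · rintro ⟨m, hm⟩
      exact ⟨⟨_, hm.1⟩, ⟨_, hm.2⟩⟩

lemma isFCI_minSet (A : Set II) : IsFCI (minSet A) := by
  rcases (minSet_subsingleton A).eq_empty_or_singleton with h | ⟨i, h⟩
  · rw [h]; exact isFCI_empty
  · rw [h]; exact isFCI_singleton i

lemma isFCI_maxSet (A : Set II) : IsFCI (maxSet A) := by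
  rcases (maxSet_subsingleton A).eq_empty_or_singleton with h | ⟨i, h⟩
  · rw [h]; exact isFCI_empty
  · rw [h]; exact isFCI_singleton i

lemma finite_isFCI {A : Set II} (hA : A.Finite) : IsFCI A :=
  Set.Finite.induction_on _ hA isFCI_empty
    (fun _ _ ih => by rw [Set.insert_eq]; exact (isFCI_singleton _).union ih)

lemma IsFCI.lSet_finite {A : Set II} (hA : IsFCI A) : (lSet A).Finite := by
  obtain ⟨k, f, hf, rfl⟩ := hA
  have hsub : lSet (⋃ m, f m) ⊆ {0} ∪ ⋃ m, minSet (f m) := by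
    rintro i ⟨hiA, hi⟩
    rcases hi with rfl | ⟨i', hi'lt, hgap⟩
    · exact Set.mem_union_left _ rfl
    · obtain ⟨m, him⟩ := Set.mem_iUnion.1 hiA
      refine Set.mem_union_right _ (Set.mem_iUnion.2 ⟨m, him, fun j hj => ?_⟩)
      by_contra hji
      push_neg at hji
      obtain ⟨x, hx1, hx2⟩ := exists_between (max_lt hi'lt hji : max i' j < i)
      have hxfm : x ∈ f m := by
        rcases hf m with ⟨a, b, hab⟩ | ⟨a, ha⟩
        · rw [hab] at him hj ⊢
          exact ⟨hj.1.trans ((le_max_right i' j).trans hx1.le), hx2.le.trans him.2⟩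
        · rw [ha] at hj ⊢
          exact hj.trans ((le_max_right i' j).trans hx1.le)
      have hmem : x ∈ Set.Ioo i' i ∩ ⋃ m, f m :=
        ⟨⟨(le_max_left i' j).trans_lt hx1, hx2⟩, Set.mem_iUnion.2 ⟨m, hxfm⟩⟩
      rw [hgap] at hmem
      exact hmem
  exact ((Set.finite_singleton 0).union
    (Set.finite_iUnion fun m => (minSet_subsingleton (f m)).finite)).subset hsub

lemma IsFCI.rSet_finite {A : Set II} (hA : IsFCI A) : (rSet A).Finite := by
  obtain ⟨k, f, hf, rfl⟩ := hA
  have hsub : rSet (⋃ m, f m) ⊆ ⋃ m, maxSet (f m) := by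
    rintro i ⟨hiA, i'', hi''gt, hgap⟩
    obtain ⟨m, him⟩ := Set.mem_iUnion.1 hiA
    refine Set.mem_iUnion.2 ⟨m, him, fun j hj => ?_⟩
    by_contra hij
    push_neg at hij
    obtain ⟨x, hx1, hx2⟩ := exists_between (lt_min hi''gt hij : i < min i'' j)
    have hxfm : x ∈ f m := by
      rcases hf m with ⟨a, b, hab⟩ | ⟨a, ha⟩
      · rw [hab] at him hj ⊢
        exact ⟨him.1.trans hx1.le, (hx2.le.trans (min_le_right i'' j)).trans hj.2⟩
      · rw [ha] at him ⊢
        exact him.trans hx1.le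
    have hmem : x ∈ Set.Ioo i i'' ∩ ⋃ m, f m :=
      ⟨⟨hx1, hx2.trans_le (min_le_left i'' j)⟩, Set.mem_iUnion.2 ⟨m, hxfm⟩⟩
    rw [hgap] at hmem
    exact hmem
  exact (Set.finite_iUnion fun m => (maxSet_subsingleton (f m)).finite).subset hsub

/-- `L(𝕀)` as an `L_L`-structure. -/
instance fciLL : LL.Structure FCI where
  funMap {m} f :=
    match f with
    | .union => fun v => ⟨(v 0).1 ∪ (v 1).1, (v 0).2.union (v 1).2⟩
    | .inter => fun v => ⟨(v 0).1 ∩ (v 1).1, (v 0).2.inter (v 1).2⟩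
    | .bot => fun _ => ⟨∅, isFCI_empty⟩
    | .zero => fun _ => ⟨{0}, isFCI_singleton 0⟩
    | .min => fun v => ⟨minSet (v 0).1, isFCI_minSet _⟩
    | .max => fun v => ⟨maxSet (v 0).1, isFCI_maxSet _⟩
    | .left => fun v => ⟨lSet (v 0).1, finite_isFCI (v 0).2.lSet_finite⟩
    | .right => fun v => ⟨rSet (v 0).1, finite_isFCI (v 0).2.rSet_finite⟩
  RelMap {m} r := Empty.elim r

universe u v

/-! ### Auxiliary material for Statement 8 -/

section Aux

open BoundedFormula

variable {β : Type*}

/-- Term builder: union. -/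
def tU (t u : LWSO.Term β) : LWSO.Term β := Term.func WSOFunc.union ![t, u]
/-- Term builder: intersection. -/
def tI (t u : LWSO.Term β) : LWSO.Term β := Term.func WSOFunc.inter ![t, u]
/-- Term builder: `𝔰⁻¹`. -/
def tS (t u : LWSO.Term β) : LWSO.Term β := Term.func WSOFunc.sinv ![t, u]
/-- Term builder: min. -/
def tM (t : LWSO.Term β) : LWSO.Term β := Term.func WSOFunc.min ![t]
/-- Term builder: `𝟎`. -/
def t0 : LWSO.Term β := Term.func WSOFunc.zero ![]
/-- Term builder: `⊥`. -/
def tB : LWSO.Term β := Term.func WSOFunc.bot ![]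

@[simp] lemma realize_tU (v : β → FinSub) (t u : LWSO.Term β) :
    ((tU t u).realize v).1 = (t.realize v).1 ∪ (u.realize v).1 := rfl

@[simp] lemma realize_tI (v : β → FinSub) (t u : LWSO.Term β) :
    ((tI t u).realize v).1 = (t.realize v).1 ∩ (u.realize v).1 := rfl

@[simp] lemma realize_tS (v : β → FinSub) (t u : LWSO.Term β) :
    ((tS t u).realize v).1 = sInvSet (t.realize v).1 (u.realize v).1 := rfl

@[simp] lemma realize_tM (v : β → FinSub) (t : LWSO.Term β) :
    ((tM t).realize v).1 = minSet (t.realize v).1 := rfl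

@[simp] lemma realize_t0 (v : β → FinSub) : ((t0 : LWSO.Term β).realize v).1 = {0} := rfl

@[simp] lemma realize_tB (v : β → FinSub) : ((tB : LWSO.Term β).realize v).1 = ∅ := rfl

/-- The key set-level fact: nonemptiness of a finite `A ⊆ 𝕀` is equivalent to a positive
(equational) condition. -/
lemma nonempty_aux (A : Set II) (hA : A.Finite) :
    (A ∩ ({0} : Set II) = {0} ∨ sInvSet (minSet A ∪ {0}) A = {0}) ↔ A.Nonempty := by
  constructor
  · rintro (h | h)
    · have h0 : (0 : II) ∈ A ∩ ({0} : Set II) := by rw [h]; exact rfl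
      exact ⟨0, h0.1⟩
    · have h0 : (0 : II) ∈ sInvSet (minSet A ∪ {0}) A := by rw [h]; exact rfl
      obtain ⟨-, j, -, -, -, hjA⟩ := h0
      exact ⟨j, hjA⟩
  · intro hne
    by_cases h0 : (0 : II) ∈ A
    · exact Or.inl (Set.inter_eq_right.mpr (Set.singleton_subset_iff.2 h0))
    · obtain ⟨d, hdA, hdmin⟩ := Set.exists_min_image A id hA hne
      have hd0 : d ≠ 0 := fun h => h0 (h ▸ hdA)
      have hdpos : (0 : II) < d := lt_of_le_of_ne (zero_le : (0 : II) ≤ d) (Ne.symm hd0)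
      have hmin : minSet A = {d} := by
        ext i
        constructor
        · rintro ⟨hiA, hi⟩
          exact le_antisymm (hi d hdA) (hdmin i hiA)
        · rintro rfl
          exact ⟨hdA, hdmin⟩
      refine Or.inr ?_
      rw [hmin]
      ext i
      constructor
      · rintro ⟨hiS, j, hjS, hij, -, -⟩
        rcases hiS with hi | hi
        · exfalso
          rw [Set.mem_singleton_iff] at hi
          subst hi
          rcases hjS with hj | hj <;> rw [Set.mem_singleton_iff] at hj <;> subst hj
          · exact lt_irrefl _ hij
          · exact absurd hij (not_lt.2 zero_le)
        · rw [Set.mem_singleton_iff] at hi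
          exact hi
      · rintro rfl
        refine ⟨Or.inr rfl, d, Or.inl rfl, hdpos, ?_, hdA⟩
        rintro k (hk | hk) hk0
        · exact le_of_eq hk.symm
        · rw [Set.mem_singleton_iff] at hk
          exact absurd (hk ▸ hk0) (lt_irrefl (0 : II))

/-- The positive quantifier-free formula expressing that (the value of) `t` is nonempty. -/
def nonemptyFla {α : Type*} {k : ℕ} (t : LWSO.Term (α ⊕ Fin k)) : LWSO.BoundedFormula α k :=
  (Term.bdEqual (tI t t0) t0) ⊔ (Term.bdEqual (tS (tU (tM t) t0) t) t0)

lemma isPosEx_nonemptyFla {α : Type*} {k : ℕ} (t : LWSO.Term (α ⊕ Fin k)) :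
    IsPosEx (nonemptyFla t) :=
  IsPosEx.sup (IsPosEx.equal _ _) (IsPosEx.equal _ _)

lemma realize_nonemptyFla {α : Type*} {k : ℕ} (t : LWSO.Term (α ⊕ Fin k))
    (v : α → FinSub) (xs : Fin k → FinSub) :
    (nonemptyFla t).Realize v xs ↔ (t.realize (Sum.elim v xs)).1.Nonempty := by
  rw [← nonempty_aux _ (t.realize (Sum.elim v xs)).2]
  simp only [nonemptyFla, realize_sup, realize_bdEqual, Subtype.ext_iff,
    realize_tI, realize_t0, realize_tS, realize_tU, realize_tM]

/-- The positive existential formula expressing that `t₁ ≠ t₂`. -/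
def neFla {α : Type*} {k : ℕ} (t₁ t₂ : LWSO.Term (α ⊕ Fin k)) : LWSO.BoundedFormula α k :=
  let s : LWSO.Term (α ⊕ Fin (k + 1)) := Term.var (Sum.inr (Fin.last k))
  let t₁' := t₁.relabel (Sum.map id Fin.castSucc)
  let t₂' := t₂.relabel (Sum.map id Fin.castSucc)
  ((nonemptyFla s) ⊓ (((Term.bdEqual (tI s t₁') s) ⊓ (Term.bdEqual (tI s t₂') tB)) ⊔
    ((Term.bdEqual (tI s t₂') s) ⊓ (Term.bdEqual (tI s t₁') tB)))).ex

lemma isPosEx_neFla {α : Type*} {k : ℕ} (t₁ t₂ : LWSO.Term (α ⊕ Fin k)) :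
    IsPosEx (neFla t₁ t₂) :=
  IsPosEx.ex (IsPosEx.inf (isPosEx_nonemptyFla _)
    (IsPosEx.sup (IsPosEx.inf (IsPosEx.equal _ _) (IsPosEx.equal _ _))
      (IsPosEx.inf (IsPosEx.equal _ _) (IsPosEx.equal _ _))))

lemma snoc_comp_map {α : Type*} {k : ℕ} (v : α → FinSub) (xs : Fin k → FinSub) (a : FinSub) :
    (Sum.elim v (Fin.snoc xs a) : α ⊕ Fin (k + 1) → FinSub) ∘ Sum.map id Fin.castSucc =
      Sum.elim v xs := by
  funext x
  cases x with
  | inl x => rfl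
  | inr i => simp [Fin.snoc_castSucc]

lemma realize_neFla {α : Type*} {k : ℕ} (t₁ t₂ : LWSO.Term (α ⊕ Fin k))
    (v : α → FinSub) (xs : Fin k → FinSub) :
    (neFla t₁ t₂).Realize v xs ↔
      t₁.realize (Sum.elim v xs) ≠ t₂.realize (Sum.elim v xs) := by
  set A := t₁.realize (Sum.elim v xs) with hA
  set B := t₂.realize (Sum.elim v xs) with hB
  have key : (neFla t₁ t₂).Realize v xs ↔ ∃ a : FinSub, a.1.Nonempty ∧
      ((a.1 ∩ A.1 = a.1 ∧ a.1 ∩ B.1 = ∅) ∨ (a.1 ∩ B.1 = a.1 ∧ a.1 ∩ A.1 = ∅)) := by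
    simp only [neFla, BoundedFormula.realize_ex]
    refine exists_congr fun a => ?_
    simp only [BoundedFormula.realize_inf, BoundedFormula.realize_sup,
      BoundedFormula.realize_bdEqual, realize_nonemptyFla, Subtype.ext_iff, realize_tI,
      realize_tB, Term.realize_relabel, snoc_comp_map, Term.realize_var, Sum.elim_inr,
      Fin.snoc_last, ← hA, ← hB]
  rw [key]
  constructor
  · rintro ⟨a, ⟨x, hx⟩, h⟩ hAB
    rcases h with ⟨h1, h2⟩ | ⟨h1, h2⟩
    · have hxA : x ∈ A.1 := by
        have : x ∈ a.1 ∩ A.1 := by rw [h1]; exact hx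
        exact this.2
      have hxB : x ∈ a.1 ∩ B.1 := ⟨hx, hAB ▸ hxA⟩
      rw [h2] at hxB
      exact hxB
    · have hxB : x ∈ B.1 := by
        have : x ∈ a.1 ∩ B.1 := by rw [h1]; exact hx
        exact this.2
      have hxA : x ∈ a.1 ∩ A.1 := ⟨hx, hAB ▸ hxB⟩
      rw [h2] at hxA
      exact hxA
  · intro hne
    have hx : ∃ x : II, (x ∈ A.1 ∧ x ∉ B.1) ∨ (x ∈ B.1 ∧ x ∉ A.1) := by
      by_contra hcon
      push_neg at hcon
      apply hne
      ext1
      ext x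
      exact ⟨fun h => (hcon x).1 h, fun h => (hcon x).2 h⟩
    obtain ⟨x, hx⟩ := hx
    refine ⟨⟨{x}, Set.finite_singleton x⟩, ⟨x, rfl⟩, ?_⟩
    rcases hx with ⟨h1, h2⟩ | ⟨h1, h2⟩
    · exact Or.inl ⟨Set.inter_eq_left.mpr (Set.singleton_subset_iff.2 h1),
        by rw [Set.singleton_inter_eq_empty]; exact h2⟩
    · exact Or.inr ⟨Set.inter_eq_left.mpr (Set.singleton_subset_iff.2 h1),
        by rw [Set.singleton_inter_eq_empty]; exact h2⟩


/-- The main induction: every quantifier-free formula and its negation are equivalent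
over `WSO(𝕀)` to positive existential formulas. -/
lemma qf_posEx_pair {α : Type*} {k : ℕ} (φ : LWSO.BoundedFormula α k) (h : φ.IsQF) :
    ∃ ψ ψ' : LWSO.BoundedFormula α k, IsPosEx ψ ∧ IsPosEx ψ' ∧
      ∀ (v : α → FinSub) (xs : Fin k → FinSub),
        (φ.Realize v xs ↔ ψ.Realize v xs) ∧ (¬ φ.Realize v xs ↔ ψ'.Realize v xs) := by
  induction h with
  | falsum =>
      refine ⟨Term.bdEqual t0 tB, Term.bdEqual t0 t0, IsPosEx.equal _ _, IsPosEx.equal _ _,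
        fun v xs => ⟨?_, ?_⟩⟩
      · exact iff_of_false (fun h => h)
          (fun h => Set.singleton_ne_empty (0 : II) (congrArg Subtype.val h))
      · exact iff_of_true (fun h => h) rfl
  | of_isAtomic ha =>
      cases ha with
      | equal t₁ t₂ =>
          refine ⟨Term.bdEqual t₁ t₂, neFla t₁ t₂, IsPosEx.equal _ _, isPosEx_neFla _ _,
            fun v xs => ⟨Iff.rfl, ?_⟩⟩
          rw [realize_neFla, realize_bdEqual]
      | rel R ts => exact R.elim
  | imp h₁ h₂ ih₁ ih₂ =>
      obtain ⟨ψ₁, ψ₁', hp₁, hp₁', he₁⟩ := ih₁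
      obtain ⟨ψ₂, ψ₂', hp₂, hp₂', he₂⟩ := ih₂
      refine ⟨ψ₁' ⊔ ψ₂, ψ₁ ⊓ ψ₂', IsPosEx.sup hp₁' hp₂, IsPosEx.inf hp₁ hp₂',
        fun v xs => ?_⟩
      obtain ⟨e₁, e₁'⟩ := he₁ v xs
      obtain ⟨e₂, e₂'⟩ := he₂ v xs
      constructor
      · rw [realize_imp, realize_sup, ← e₁', ← e₂]
        tauto
      · rw [realize_imp, realize_inf, ← e₁, ← e₂']
        tauto

end Aux

/-- Every quantifier-free `L_WSO`-formula is equivalent, in every model of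
`Th(WSO(𝕀))`, to a positive existential `L_WSO`-formula. -/
theorem qf_equivalent_posEx (n : ℕ) (φ : LWSO.Formula (Fin n)) (hφ : φ.IsQF) :
    ∃ ψ : LWSO.Formula (Fin n), IsPosEx ψ ∧
      ∀ (M : Type u) [LWSO.Structure M], M ⊨ LWSO.completeTheory FinSub →
        ∀ v : Fin n → M, (φ.Realize v ↔ ψ.Realize v) := by
  obtain ⟨ψ, ψ', hp, -, he⟩ := qf_posEx_pair φ hφ
  refine ⟨ψ, hp, ?_⟩
  have hFin : ∀ v : Fin n → FinSub, Formula.Realize φ v ↔ Formula.Realize ψ v := by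
    intro v
    exact (he v _).1
  set σ : LWSO.Sentence := ((φ.iff ψ).relabel (Sum.inr : Fin n → Empty ⊕ Fin n)).iAlls (Fin n) with hσdef
  have hσ : FinSub ⊨ σ := by
    rw [hσdef, Sentence.Realize, Formula.realize_iAlls]
    intro i
    simpa [Formula.realize_iff] using hFin i
  intro M _ hM v
  haveI : M ⊨ LWSO.completeTheory FinSub := hM
  have hMσ : M ⊨ σ :=
    (LWSO.completeTheory FinSub).realize_sentence_of_mem (mem_completeTheory.2 hσ)
  rw [hσdef, Sentence.Realize, Formula.realize_iAlls] at hMσ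
  have := hMσ v
  rw [Formula.realize_relabel] at this
  rwa [Formula.realize_iff] at this

end MCpaper
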